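/- (Second recurrence formula for the Euler–Poisson–Darboux equation.) Let γ = (γ_1,…,γ_n) be a multi-index with all γ_i > 0, let k ∈ ℝ, and let u = u(x,t) be a three times continuously differentiable solution of Δ_γ u = u_tt + (k/t) u_t for x ∈ ℝ^n_+, t > 0. Then v(x,t) = (1/t) ∂u(x,t)/∂t solves Δ_γ v = v_tt + ((k+2)/t) v_t for x ∈ ℝ^n_+, t > 0. -/

import Mathlib

open MeasureTheory Real Set Filter Topology

noncomputable section

/-- Partial derivative in the `i`-th coordinate. -/
def pderiv' {n : ℕ} (i : Fin n) (f : (Fin n → ℝ) → ℝ) (x : Fin n → ℝ) : ℝ :=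
  deriv (fun t => f (Function.update x i t)) (x i)

/-- The Laplace–Bessel operator `Δ_γ = Σ_i (∂²/∂x_i² + (γ_i/x_i) ∂/∂x_i)`. -/
def laplaceBessel {n : ℕ} (γ : Fin n → ℝ) (f : (Fin n → ℝ) → ℝ) (x : Fin n → ℝ) : ℝ :=
  ∑ i, (pderiv' i (pderiv' i f) x + γ i / x i * pderiv' i f x)

/-! ### Auxiliary lemmas -/

section aux
variable {E : Type*} [NormedAddCommGroup E] [NormedSpace ℝ E] {S : Set E} {G : E → ℝ}

/-- Directional derivative of `G` in direction `v`. -/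
def Dd (v : E) (G : E → ℝ) : E → ℝ := fun p => fderiv ℝ G p v

lemma DvCD {m nn : WithTop ℕ∞} (hG : ContDiffOn ℝ nn G S) (hS : IsOpen S)
    (hmn : m + 1 ≤ nn) (v : E) :
    ContDiffOn ℝ m (Dd v G) S :=
  (hG.fderiv_of_isOpen hS hmn).clm_apply contDiffOn_const

lemma symmD (hG : ContDiffOn ℝ 2 G S) (hS : IsOpen S) {p : E} (hp : p ∈ S) (v w : E) :
    fderiv ℝ (Dd v G) p w = fderiv ℝ (Dd w G) p v := by
  have hat : ContDiffAt ℝ 2 G p := hG.contDiffAt (hS.mem_nhds hp)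
  have hd : DifferentiableAt ℝ (fderiv ℝ G) p := by
    have h1 : ContDiffOn ℝ 1 (fderiv ℝ G) S :=
      hG.fderiv_of_isOpen hS (by norm_num)
    exact (h1.contDiffAt (hS.mem_nhds hp)).differentiableAt one_ne_zero
  have h1 : ∀ z : E, fderiv ℝ (Dd z G) p = (fderiv ℝ (fderiv ℝ G) p).flip z := by
    intro z
    have := fderiv_clm_apply (c := fderiv ℝ G) (u := fun _ => z) hd (differentiableAt_const z)
    show fderiv ℝ (fun y => fderiv ℝ G y z) p = _
    simpa using this
  rw [h1 v, h1 w]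
  simp only [ContinuousLinearMap.flip_apply]
  exact (hat.isSymmSndFDerivAt (by simp)).eq w v

end aux

section prodlem
variable {n : ℕ} {G : (Fin n → ℝ) × ℝ → ℝ} {S : Set ((Fin n → ℝ) × ℝ)}
  {x : Fin n → ℝ} {t : ℝ}

lemma hasDerivAt_snd (hG : DifferentiableAt ℝ G (x, t)) :
    HasDerivAt (fun s => G (x, s)) (Dd ((0 : Fin n → ℝ), (1 : ℝ)) G (x, t)) t := by
  have hline : HasDerivAt (fun s : ℝ => ((x, s) : (Fin n → ℝ) × ℝ)) (0, 1) t :=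
    (hasDerivAt_const t x).prodMk (hasDerivAt_id t)
  exact hG.hasFDerivAt.comp_hasDerivAt t hline

lemma hasDerivAt_upd (i : Fin n) (hG : DifferentiableAt ℝ G (x, t)) :
    HasDerivAt (fun s => G (Function.update x i s, t))
      (Dd ((Pi.single i 1 : Fin n → ℝ), (0 : ℝ)) G (x, t)) (x i) := by
  have hline : HasDerivAt (fun s : ℝ => ((Function.update x i s, t) : (Fin n → ℝ) × ℝ))
      ((Pi.single i 1 : Fin n → ℝ), (0 : ℝ)) (x i) :=
    (hasDerivAt_update x i (x i)).prodMk (hasDerivAt_const (x i) t)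
  have hG' : HasFDerivAt G (fderiv ℝ G (x, t)) (Function.update x i (x i), t) := by
    rw [Function.update_eq_self]; exact hG.hasFDerivAt
  exact hG'.comp_hasDerivAt (x i) hline

lemma diffAt_of_C1 (hS : IsOpen S) (hG : ContDiffOn ℝ 1 G S) (hp : (x, t) ∈ S) :
    DifferentiableAt ℝ G (x, t) :=
  (hG.contDiffAt (hS.mem_nhds hp)).differentiableAt one_ne_zero

lemma pderiv_eq_Dd (hS : IsOpen S) (hG : ContDiffOn ℝ 1 G S) (hp : (x, t) ∈ S) (i : Fin n) :
    pderiv' i (fun x' => G (x', t)) x = Dd (Pi.single i 1, 0) G (x, t) :=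
  (hasDerivAt_upd i (diffAt_of_C1 hS hG hp)).deriv

lemma ev_upd (hS : IsOpen S) (hp : (x, t) ∈ S) (i : Fin n) :
    ∀ᶠ s in 𝓝 (x i), (Function.update x i s, t) ∈ S := by
  have hc : ContinuousAt (fun s : ℝ => ((Function.update x i s, t) : (Fin n → ℝ) × ℝ)) (x i) :=
    ((continuous_const.update i continuous_id).prodMk continuous_const).continuousAt
  have hmem : S ∈ 𝓝 ((Function.update x i (x i), t) : (Fin n → ℝ) × ℝ) := by
    simpa [Function.update_eq_self] using hS.mem_nhds hp
  exact hc.preimage_mem_nhds hmem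

lemma pderiv'_congr {f g : (Fin n → ℝ) → ℝ}
    (h : ∀ᶠ s in 𝓝 (x i), f (Function.update x i s) = g (Function.update x i s)) :
    pderiv' i f x = pderiv' i g x :=
  Filter.EventuallyEq.deriv_eq h

lemma pderiv'_const_mul {f : (Fin n → ℝ) → ℝ} (c : ℝ) (i : Fin n) :
    pderiv' i (fun x' => c * f x') x = c * pderiv' i f x := by
  simp only [pderiv']
  exact deriv_const_mul_field c

lemma pderiv2_eq_Dd (hS : IsOpen S) (hG : ContDiffOn ℝ 2 G S) (hp : (x, t) ∈ S) (i : Fin n) :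
    pderiv' i (pderiv' i (fun x' => G (x', t))) x
      = Dd (Pi.single i 1, 0) (Dd (Pi.single i 1, 0) G) (x, t) := by
  have hDG : ContDiffOn ℝ 1 (Dd ((Pi.single i 1 : Fin n → ℝ), (0 : ℝ)) G) S :=
    DvCD hG hS (by norm_num) _
  have heq : pderiv' i (pderiv' i (fun x' => G (x', t))) x
      = pderiv' i (fun x' => Dd (Pi.single i 1, 0) G (x', t)) x := by
    apply pderiv'_congr
    filter_upwards [ev_upd hS hp i] with s hs
    exact pderiv_eq_Dd hS (hG.of_le one_le_two) hs i
  rw [heq]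
  exact pderiv_eq_Dd hS hDG hp i

lemma lap_eq_Dd (γ : Fin n → ℝ) (hS : IsOpen S) (hG : ContDiffOn ℝ 2 G S) (hp : (x, t) ∈ S) :
    laplaceBessel γ (fun x' => G (x', t)) x
      = ∑ i, (Dd (Pi.single i 1, 0) (Dd (Pi.single i 1, 0) G) (x, t)
          + γ i / x i * Dd (Pi.single i 1, 0) G (x, t)) := by
  unfold laplaceBessel
  refine Finset.sum_congr rfl fun i _ => ?_
  rw [pderiv2_eq_Dd hS hG hp i, pderiv_eq_Dd hS (hG.of_le one_le_two) hp i]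

end prodlem

/-- Second recurrence formula for the Euler–Poisson–Darboux equation.
If `u` is a three times continuously differentiable solution of `Δ_γ u = u_tt + (k/t) u_t` on
`ℝ^n_+ × (0,∞)`, then `v(x,t) = (1/t) ∂u/∂t` solves `Δ_γ v = v_tt + ((k+2)/t) v_t` there. -/
theorem EPD_second_recurrence
    (n : ℕ) (γ : Fin n → ℝ) (hγ : ∀ i, 0 < γ i) (k : ℝ)
    (u : (Fin n → ℝ) → ℝ → ℝ)
    (hu : ContDiffOn ℝ 3 (fun p : (Fin n → ℝ) × ℝ => u p.1 p.2)
      {p | (∀ i, 0 < p.1 i) ∧ 0 < p.2})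
    (hpde : ∀ x : Fin n → ℝ, (∀ i, 0 < x i) → ∀ t : ℝ, 0 < t →
      laplaceBessel γ (fun x' => u x' t) x
        = deriv (deriv (u x)) t + k / t * deriv (u x) t) :
    ∀ x : Fin n → ℝ, (∀ i, 0 < x i) → ∀ t : ℝ, 0 < t →
      laplaceBessel γ (fun x' => (1 / t) * deriv (u x') t) x
        = deriv (deriv (fun s : ℝ => (1 / s) * deriv (u x) s)) t
            + (k + 2) / t * deriv (fun s : ℝ => (1 / s) * deriv (u x) s) t := by
  intro x hx t ht
  set S : Set ((Fin n → ℝ) × ℝ) := {p | (∀ i, 0 < p.1 i) ∧ 0 < p.2} with hSdef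
  set F : (Fin n → ℝ) × ℝ → ℝ := fun p => u p.1 p.2 with hFdef
  set et : (Fin n → ℝ) × ℝ := ((0 : Fin n → ℝ), (1 : ℝ)) with hetdef
  have hS : IsOpen S := by
    have h2 : IsOpen {p : (Fin n → ℝ) × ℝ | 0 < p.2} :=
      isOpen_lt continuous_const continuous_snd
    have h1 : IsOpen {p : (Fin n → ℝ) × ℝ | ∀ i, 0 < p.1 i} := by
      have : {p : (Fin n → ℝ) × ℝ | ∀ i, 0 < p.1 i} = ⋂ i, {p | 0 < p.1 i} := by
        ext p; simp
      rw [this]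
      exact isOpen_iInter_of_finite fun i =>
        isOpen_lt continuous_const ((continuous_apply i).comp continuous_fst)
    exact h1.inter h2
  have hmem : ∀ s : ℝ, 0 < s → ((x, s) : (Fin n → ℝ) × ℝ) ∈ S := fun s hs => ⟨hx, hs⟩
  have hxt : ((x, t) : (Fin n → ℝ) × ℝ) ∈ S := hmem t ht
  -- smoothness of directional derivatives
  have hF3 : ContDiffOn ℝ 3 F S := hu
  have hF2 : ContDiffOn ℝ 2 F S := hF3.of_le (by norm_num)
  have hF1 : ContDiffOn ℝ 1 F S := hF3.of_le (by norm_num)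
  have hDet2 : ContDiffOn ℝ 2 (Dd et F) S := DvCD hF3 hS (by norm_num) et
  have hDet1 : ContDiffOn ℝ 1 (Dd et F) S := hDet2.of_le (by norm_num)
  have hDetet1 : ContDiffOn ℝ 1 (Dd et (Dd et F)) S := DvCD hDet2 hS (by norm_num) et
  -- the one-variable functions
  set g0 : ℝ → ℝ := fun s => Dd et F (x, s) with hg0def
  set g1 : ℝ → ℝ := fun s => Dd et (Dd et F) (x, s) with hg1def
  set g2 : ℝ → ℝ := fun s => Dd et (Dd et (Dd et F)) (x, s) with hg2def
  have hg0 : ∀ s, 0 < s → HasDerivAt g0 (g1 s) s := fun s hs =>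
    hasDerivAt_snd (diffAt_of_C1 hS hDet1 (hmem s hs))
  have hg1 : ∀ s, 0 < s → HasDerivAt g1 (g2 s) s := fun s hs =>
    hasDerivAt_snd (diffAt_of_C1 hS hDetet1 (hmem s hs))
  have hud : ∀ (x' : Fin n → ℝ) (s : ℝ), ((x', s) : (Fin n → ℝ) × ℝ) ∈ S →
      deriv (u x') s = Dd et F (x', s) := by
    intro x' s hs
    exact (hasDerivAt_snd (diffAt_of_C1 hS hF1 hs)).deriv
  have hud2 : ∀ s : ℝ, 0 < s → deriv (deriv (u x)) s = g1 s := by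
    intro s hs
    have hev : deriv (u x) =ᶠ[𝓝 s] g0 := by
      filter_upwards [Ioi_mem_nhds hs] with s' hs'
      exact hud x s' (hmem s' hs')
    rw [hev.deriv_eq]
    exact (hg0 s hs).deriv
  -- Step (★): the PDE in terms of directional derivatives
  have star : ∀ s : ℝ, 0 < s →
      (∑ i, (Dd (Pi.single i 1, 0) (Dd (Pi.single i 1, 0) F) (x, s)
          + γ i / x i * Dd (Pi.single i 1, 0) F (x, s)))
        = g1 s + k / s * g0 s := by
    intro s hs
    have h1 : laplaceBessel γ (fun x' => u x' s) x
        = ∑ i, (Dd (Pi.single i 1, 0) (Dd (Pi.single i 1, 0) F) (x, s)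
            + γ i / x i * Dd (Pi.single i 1, 0) F (x, s)) :=
      lap_eq_Dd γ hS hF2 (hmem s hs)
    rw [← h1, hpde x hx s hs, hud x s (hmem s hs), hud2 s hs]
  -- LHS computation
  have keyf : ∀ (i : Fin n) (x' : Fin n → ℝ), ((x', t) : (Fin n → ℝ) × ℝ) ∈ S →
      pderiv' i (fun x'' => (1 / t) * deriv (u x'') t) x'
        = (1 / t) * Dd (Pi.single i 1, 0) (Dd et F) (x', t) := by
    intro i x' hx'
    have h1 : pderiv' i (fun x'' => (1 / t) * deriv (u x'') t) x'
        = pderiv' i (fun x'' => (1 / t) * Dd et F (x'', t)) x' := by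
      apply pderiv'_congr
      filter_upwards [ev_upd hS hx' i] with s hs
      rw [hud _ t hs]
    rw [h1, pderiv'_const_mul, pderiv_eq_Dd hS hDet1 hx' i]
  have keyf2 : ∀ i : Fin n,
      pderiv' i (pderiv' i (fun x'' => (1 / t) * deriv (u x'') t)) x
        = (1 / t) * Dd (Pi.single i 1, 0) (Dd (Pi.single i 1, 0) (Dd et F)) (x, t) := by
    intro i
    have hDi1 : ContDiffOn ℝ 1 (Dd ((Pi.single i 1 : Fin n → ℝ), (0:ℝ)) (Dd et F)) S :=
      DvCD hDet2 hS (by norm_num) _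
    have h1 : pderiv' i (pderiv' i (fun x'' => (1 / t) * deriv (u x'') t)) x
        = pderiv' i (fun x' => (1 / t) * Dd (Pi.single i 1, 0) (Dd et F) (x', t)) x := by
      apply pderiv'_congr
      filter_upwards [ev_upd hS hxt i] with s hs
      exact keyf i _ hs
    rw [h1, pderiv'_const_mul, pderiv_eq_Dd hS hDi1 hxt i]
  -- the swaps
  have swap1 : ∀ i : Fin n, ∀ p ∈ S,
      Dd ((Pi.single i 1 : Fin n → ℝ), (0:ℝ)) (Dd et F) p
        = Dd et (Dd (Pi.single i 1, 0) F) p := by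
    intro i p hp
    exact symmD hF2 hS hp et (Pi.single i 1, 0)
  have swap2 : ∀ i : Fin n,
      Dd ((Pi.single i 1 : Fin n → ℝ), (0:ℝ)) (Dd (Pi.single i 1, 0) (Dd et F)) (x, t)
        = Dd et (Dd (Pi.single i 1, 0) (Dd (Pi.single i 1, 0) F)) (x, t) := by
    intro i
    have hC2i : ContDiffOn ℝ 2 (Dd ((Pi.single i 1 : Fin n → ℝ), (0:ℝ)) F) S :=
      DvCD hF3 hS (by norm_num) _
    have hev : Dd ((Pi.single i 1 : Fin n → ℝ), (0:ℝ)) (Dd et F)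
        =ᶠ[𝓝 ((x, t) : (Fin n → ℝ) × ℝ)] Dd et (Dd (Pi.single i 1, 0) F) := by
      filter_upwards [hS.mem_nhds hxt] with p hp
      exact swap1 i p hp
    show fderiv ℝ (Dd (Pi.single i 1, 0) (Dd et F)) (x, t) (Pi.single i 1, 0) = _
    rw [hev.fderiv_eq]
    exact symmD hC2i hS hxt et (Pi.single i 1, 0)
  -- derivative of the sum
  have hsum : HasDerivAt
      (fun s => ∑ i, (Dd (Pi.single i 1, 0) (Dd (Pi.single i 1, 0) F) (x, s)
          + γ i / x i * Dd (Pi.single i 1, 0) F (x, s)))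
      (∑ i, (Dd et (Dd (Pi.single i 1, 0) (Dd (Pi.single i 1, 0) F)) (x, t)
          + γ i / x i * Dd et (Dd (Pi.single i 1, 0) F) (x, t))) t := by
    apply HasDerivAt.fun_sum
    intro i _
    have hC2i : ContDiffOn ℝ 2 (Dd ((Pi.single i 1 : Fin n → ℝ), (0:ℝ)) F) S :=
      DvCD hF3 hS (by norm_num) _
    have hC1ii : ContDiffOn ℝ 1
        (Dd ((Pi.single i 1 : Fin n → ℝ), (0:ℝ)) (Dd (Pi.single i 1, 0) F)) S :=
      DvCD hC2i hS (by norm_num) _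
    exact (hasDerivAt_snd (diffAt_of_C1 hS hC1ii hxt)).add
      ((hasDerivAt_snd (diffAt_of_C1 hS (hC2i.of_le one_le_two) hxt)).const_mul (γ i / x i))
  have hsum_eval : (∑ i, (Dd et (Dd (Pi.single i 1, 0) (Dd (Pi.single i 1, 0) F)) (x, t)
          + γ i / x i * Dd et (Dd (Pi.single i 1, 0) F) (x, t)))
      = g2 t + (k * -(t ^ 2)⁻¹ * g0 t + k * t⁻¹ * g1 t) := by
    have hB : HasDerivAt (fun s => g1 s + k * s⁻¹ * g0 s)
        (g2 t + ((k * -(t ^ 2)⁻¹) * g0 t + (k * t⁻¹) * g1 t)) t :=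
      (hg1 t ht).add (((hasDerivAt_inv ht.ne').const_mul k).mul (hg0 t ht))
    have hev : (fun s => ∑ i, (Dd (Pi.single i 1, 0) (Dd (Pi.single i 1, 0) F) (x, s)
          + γ i / x i * Dd (Pi.single i 1, 0) F (x, s)))
        =ᶠ[𝓝 t] fun s => g1 s + k * s⁻¹ * g0 s := by
      filter_upwards [Ioi_mem_nhds ht] with s hs
      rw [star s hs, div_eq_mul_inv]
    rw [← hsum.deriv, hev.deriv_eq, hB.deriv]
  -- LHS final form
  have hLHS : laplaceBessel γ (fun x' => 1 / t * deriv (u x') t) x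
      = (1 / t) * (g2 t + (k * -(t ^ 2)⁻¹ * g0 t + k * t⁻¹ * g1 t)) := by
    unfold laplaceBessel
    have : ∀ i : Fin n,
        pderiv' i (pderiv' i (fun x'' => (1 / t) * deriv (u x'') t)) x
          + γ i / x i * pderiv' i (fun x'' => (1 / t) * deriv (u x'') t) x
        = (1 / t) * (Dd et (Dd (Pi.single i 1, 0) (Dd (Pi.single i 1, 0) F)) (x, t)
            + γ i / x i * Dd et (Dd (Pi.single i 1, 0) F) (x, t)) := by
      intro i
      rw [keyf2 i, keyf i x hxt, swap2 i, swap1 i _ hxt]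
      ring
    rw [Finset.sum_congr rfl fun i _ => this i, ← Finset.mul_sum, hsum_eval]
  -- RHS: derivatives of h s = (1/s) * deriv (u x) s
  have hderh : ∀ s : ℝ, 0 < s →
      deriv (fun s' : ℝ => 1 / s' * deriv (u x) s') s = -(s ^ 2)⁻¹ * g0 s + s⁻¹ * g1 s := by
    intro s hs
    have hev : (fun s' : ℝ => 1 / s' * deriv (u x) s') =ᶠ[𝓝 s] fun s' => s'⁻¹ * g0 s' := by
      filter_upwards [Ioi_mem_nhds hs] with s' hs'
      rw [hud x s' (hmem s' hs'), one_div]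
    have hB : HasDerivAt (fun s' : ℝ => s'⁻¹ * g0 s')
        (-(s ^ 2)⁻¹ * g0 s + s⁻¹ * g1 s) s :=
      (hasDerivAt_inv hs.ne').mul (hg0 s hs)
    rw [hev.deriv_eq, hB.deriv]
  have hderh2 : deriv (deriv (fun s' : ℝ => 1 / s' * deriv (u x) s')) t
      = (-(-(2 * t) / (t ^ 2) ^ 2) * g0 t + -(t ^ 2)⁻¹ * g1 t)
        + (-(t ^ 2)⁻¹ * g1 t + t⁻¹ * g2 t) := by
    have hev : deriv (fun s' : ℝ => 1 / s' * deriv (u x) s')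
        =ᶠ[𝓝 t] fun s => -(s ^ 2)⁻¹ * g0 s + s⁻¹ * g1 s := by
      filter_upwards [Ioi_mem_nhds ht] with s hs
      exact hderh s hs
    have hp2 : HasDerivAt (fun s : ℝ => -(s ^ 2)⁻¹) (-(-(2 * t) / (t ^ 2) ^ 2)) t := by
      have := ((hasDerivAt_pow 2 t).inv (pow_ne_zero 2 ht.ne')).neg
      have h2 := (by simpa using this : HasDerivAt (-(fun x : ℝ => x ^ 2)⁻¹) (-(-(2 * t) / (t ^ 2) ^ 2)) t)
      exact h2
    have hB : HasDerivAt (fun s : ℝ => -(s ^ 2)⁻¹ * g0 s + s⁻¹ * g1 s)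
        ((-(-(2 * t) / (t ^ 2) ^ 2) * g0 t + -(t ^ 2)⁻¹ * g1 t)
          + (-(t ^ 2)⁻¹ * g1 t + t⁻¹ * g2 t)) t :=
      (hp2.mul (hg0 t ht)).add ((hasDerivAt_inv ht.ne').mul (hg1 t ht))
    rw [hev.deriv_eq, hB.deriv]
  rw [hLHS, hderh2, hderh t ht]
  have ht' : t ≠ 0 := ht.ne'
  field_simp
  ring
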